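/- Let g : ℝ → ℝ be defined by g(x) = 0 for x ≤ 0 and g(x) = 2^(2i) + 3·2^i·(x − 2^i) for x > 0, where i ∈ ℤ is the unique integer with 2^i ≤ x < 2^(i+1). Then for all real numbers u and t with u < t and 0 < t, one has g(t) − g(u) ≤ 3·t·(t − u). -/

import Mathlib

/-- Monotonicity of the affine pieces: for `j ≤ i` and `x ≤ 2^(j+1)`, the `i`-th affine
piece lies below the `j`-th one. -/
lemma piece_mono (j i : ℤ) (hji : j ≤ i) (x : ℝ) (hx : x ≤ (2:ℝ) ^ (j + 1)) :
    (2:ℝ) ^ (2 * i) + 3 * (2:ℝ) ^ i * (x - (2:ℝ) ^ i)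
      ≤ (2:ℝ) ^ (2 * j) + 3 * (2:ℝ) ^ j * (x - (2:ℝ) ^ j) := by
  refine Int.le_induction (motive := fun i _ => (2:ℝ) ^ (2 * i) + 3 * (2:ℝ) ^ i * (x - (2:ℝ) ^ i)
      ≤ (2:ℝ) ^ (2 * j) + 3 * (2:ℝ) ^ j * (x - (2:ℝ) ^ j)) le_rfl (fun i hji ih => ?_) i hji
  · refine le_trans ?_ ih
    have hx' : x ≤ (2:ℝ) ^ (i + 1) := hx.trans (by
      apply zpow_le_zpow_right₀ (by norm_num) (by omega))
    have hp : (0:ℝ) < (2:ℝ) ^ i := by positivity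
    have e1 : (2:ℝ) ^ (i + 1) = 2 * (2:ℝ) ^ i := by
      rw [zpow_add₀ (by norm_num : (2:ℝ) ≠ 0)]; ring
    have e2 : (2:ℝ) ^ (2 * i) = (2:ℝ) ^ i * (2:ℝ) ^ i := by
      rw [two_mul, zpow_add₀ (by norm_num : (2:ℝ) ≠ 0)]
    have e3 : (2:ℝ) ^ (2 * (i + 1)) = 4 * ((2:ℝ) ^ i * (2:ℝ) ^ i) := by
      rw [show 2 * (i + 1) = (2 * i) + 1 + 1 by ring,
        zpow_add₀ (by norm_num : (2:ℝ) ≠ 0), zpow_add₀ (by norm_num : (2:ℝ) ≠ 0), e2]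
      ring
    have hx2 : x ≤ 2 * (2:ℝ) ^ i := by rw [← e1]; exact hx'
    have key : 0 ≤ (2:ℝ) ^ i * (2 * (2:ℝ) ^ i - x) := mul_nonneg hp.le (by linarith)
    rw [e1, e2, e3]
    nlinarith [key]

theorem diff_quotient_estimate_piecewise_affine_g (g : ℝ → ℝ)
    (h0 : ∀ x : ℝ, x ≤ 0 → g x = 0)
    (h1 : ∀ (x : ℝ) (i : ℤ), (2 : ℝ) ^ i ≤ x → x < (2 : ℝ) ^ (i + 1) →
      g x = (2 : ℝ) ^ (2 * i) + 3 * (2 : ℝ) ^ i * (x - (2 : ℝ) ^ i)) :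
    ∀ u t : ℝ, u < t → 0 < t → g t - g u ≤ 3 * t * (t - u) := by
  intro u t hut ht
  set i := Int.log 2 t with hi
  have hle : (2:ℝ) ^ i ≤ t := Int.zpow_log_le_self (by norm_num) ht
  have hlt : t < (2:ℝ) ^ (i + 1) := Int.lt_zpow_succ_log_self (by norm_num) t
  have hgt : g t = (2:ℝ) ^ (2 * i) + 3 * (2:ℝ) ^ i * (t - (2:ℝ) ^ i) := h1 t i hle hlt
  -- lower bound for g u
  have hgu : (2:ℝ) ^ (2 * i) + 3 * (2:ℝ) ^ i * (u - (2:ℝ) ^ i) ≤ g u := by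
    rcases le_or_gt u 0 with hu | hu
    · rw [h0 u hu]
      have hp : (0:ℝ) < (2:ℝ) ^ i := by positivity
      have e2 : (2:ℝ) ^ (2 * i) = (2:ℝ) ^ i * (2:ℝ) ^ i := by
        rw [two_mul, zpow_add₀ (by norm_num : (2:ℝ) ≠ 0)]
      rw [e2]
      nlinarith [mul_nonpos_of_nonneg_of_nonpos hp.le hu]
    · set j := Int.log 2 u with hj
      have hleu : (2:ℝ) ^ j ≤ u := Int.zpow_log_le_self (by norm_num) hu
      have hltu : u < (2:ℝ) ^ (j + 1) := Int.lt_zpow_succ_log_self (by norm_num) u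
      have hji : j ≤ i := by
        by_contra hc
        push_neg at hc
        have : (2:ℝ) ^ (i + 1) ≤ (2:ℝ) ^ j :=
          zpow_le_zpow_right₀ (by norm_num) (by omega)
        linarith [hleu.trans hut.le, hlt]
      rw [h1 u j hleu hltu]
      exact piece_mono j i hji u hltu.le
  have hslope : g t - g u ≤ 3 * (2:ℝ) ^ i * (t - u) := by
    rw [hgt]; nlinarith
  refine hslope.trans ?_
  have := mul_le_mul_of_nonneg_right hle (le_of_lt (sub_pos.mpr hut))
  nlinarith
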